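/- For a scalar differential inequality V̇ ≤ -c₁ V^(1+1/μ) - c₂ V^(1-1/μ) with c₁, c₂ > 0 and μ > 1, the time for V to reach 0 from any initial value V₀ > 0 is bounded above by μπ/(2√(c₁c₂)). -/

import Mathlib

/-- For the scalar differential inequality `V̇ ≤ -c₁ V^(1+1/μ) - c₂ V^(1-1/μ)`
with `c₁, c₂ > 0`, `μ > 1`, the time for `V` to reach `0` from any initial
value `V₀ > 0` is bounded above by `μπ/(2√(c₁c₂))`. -/
theorem fxts_settling_time_bound
    (c₁ c₂ μ V₀ : ℝ) (hc₁ : 0 < c₁) (hc₂ : 0 < c₂) (hμ : 1 < μ) (hV₀ : 0 < V₀)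
    (V : ℝ → ℝ) (hV0 : V 0 = V₀) (hVnn : ∀ t : ℝ, 0 ≤ t → 0 ≤ V t)
    (hVdiff : ∀ t : ℝ, DifferentiableAt ℝ V t)
    (hV' : ∀ t : ℝ, 0 ≤ t → 0 < V t →
      deriv V t ≤ -c₁ * (V t) ^ (1 + 1 / μ) - c₂ * (V t) ^ (1 - 1 / μ)) :
    ∃ t₀ : ℝ, 0 ≤ t₀ ∧ t₀ ≤ μ * Real.pi / (2 * Real.sqrt (c₁ * c₂)) ∧ V t₀ = 0 := by
  by_contra hcon
  push_neg at hcon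
  set T : ℝ := μ * Real.pi / (2 * Real.sqrt (c₁ * c₂)) with hTdef
  have hμ0 : (0:ℝ) < μ := by linarith
  have hcc : 0 < Real.sqrt (c₁ * c₂) := Real.sqrt_pos.2 (by positivity)
  have hT0 : 0 < T := by
    have := Real.pi_pos
    rw [hTdef]; positivity
  have hVpos : ∀ t ∈ Set.Icc (0:ℝ) T, 0 < V t := by
    intro t ht
    exact (hVnn t ht.1).lt_of_ne' (hcon t ht.1 ht.2)
  set k : ℝ := Real.sqrt (c₁ / c₂) with hkdef
  have hk0 : 0 < k := Real.sqrt_pos.2 (by positivity)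
  have hk2 : k ^ 2 = c₁ / c₂ := Real.sq_sqrt (by positivity)
  have hkc : k * c₂ = Real.sqrt (c₁ * c₂) := by
    rw [hkdef, show c₂ = Real.sqrt (c₂ ^ 2) from (Real.sqrt_sq hc₂.le).symm,
      ← Real.sqrt_mul (by positivity)]
    congr 1
    field_simp
    simp [Real.sqrt_sq hc₂.le]
  set s : ℝ := Real.sqrt (c₁ * c₂) / μ with hsdef
  have hs0 : 0 < s := by positivity
  set g : ℝ → ℝ := fun t => Real.arctan (k * (V t) ^ (1/μ)) + s * t with hgdef
  -- derivative of g wherever V is positive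
  have hgderiv : ∀ t : ℝ, 0 < V t →
      HasDerivAt g
        (1 / (1 + (k * (V t) ^ (1/μ)) ^ 2) *
          (k * (deriv V t * (1/μ) * (V t) ^ (1/μ - 1))) + s) t := by
    intro t hx
    have hVd : HasDerivAt V (deriv V t) t := (hVdiff t).hasDerivAt
    have hrp : HasDerivAt (fun t => (V t) ^ (1/μ))
        (deriv V t * (1/μ) * (V t) ^ (1/μ - 1)) t :=
      hVd.rpow_const (Or.inl hx.ne')
    have hu : HasDerivAt (fun t => k * (V t) ^ (1/μ))
        (k * (deriv V t * (1/μ) * (V t) ^ (1/μ - 1))) t := hrp.const_mul k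
    have harc : HasDerivAt (fun t => Real.arctan (k * (V t) ^ (1/μ)))
        (1 / (1 + (k * (V t) ^ (1/μ)) ^ 2) *
          (k * (deriv V t * (1/μ) * (V t) ^ (1/μ - 1)))) t :=
      by have := (Real.hasDerivAt_arctan (k * (V t) ^ (1/μ))).comp t hu; exact this
    have hlin : HasDerivAt (fun t : ℝ => s * t) s t := by
      simpa using (hasDerivAt_id t).const_mul s
    exact harc.add hlin
  -- the derivative is nonpositive on the interior
  have hderiv_le : ∀ t ∈ Set.Ioo (0:ℝ) T, deriv g t ≤ 0 := by
    intro t ht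
    have hx : 0 < V t := hVpos t ⟨ht.1.le, ht.2.le⟩
    have hg := hgderiv t hx
    rw [hg.deriv]
    set x := V t with hxdef
    have hbound := hV' t ht.1.le hx
    -- rpow identities
    have e1 : x ^ (1/μ - 1) * x ^ (1 + 1/μ) = x ^ (2/μ) := by
      rw [← Real.rpow_add hx]
      congr 1
      ring
    have e2 : x ^ (1/μ - 1) * x ^ (1 - 1/μ) = 1 := by
      rw [← Real.rpow_add hx]
      norm_num
    have e3 : (k * x ^ (1/μ)) ^ 2 = (c₁ / c₂) * x ^ (2/μ) := by
      rw [mul_pow, hk2, pow_two, ← Real.rpow_add hx]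
      congr 2
      ring
    set A := x ^ (2/μ) with hAdef
    have hA0 : 0 < A := Real.rpow_pos_of_pos hx _
    have hxp : 0 < x ^ (1/μ - 1) := Real.rpow_pos_of_pos hx _
    have hden : 0 < 1 + (c₁/c₂) * A := by positivity
    -- monotone step: multiply the inequality by the positive factor
    have hM : (0:ℝ) < 1 / (1 + (k * x ^ (1/μ)) ^ 2) * (k * ((1/μ) * x ^ (1/μ - 1))) := by
      rw [e3]
      positivity
    have step : 1 / (1 + (k * x ^ (1/μ)) ^ 2) * (k * (deriv V t * (1/μ) * x ^ (1/μ - 1)))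
        ≤ 1 / (1 + (k * x ^ (1/μ)) ^ 2) *
            (k * ((-c₁ * x ^ (1 + 1/μ) - c₂ * x ^ (1 - 1/μ)) * (1/μ) * x ^ (1/μ - 1))) := by
      have := mul_le_mul_of_nonneg_left hbound hM.le
      calc 1 / (1 + (k * x ^ (1/μ)) ^ 2) * (k * (deriv V t * (1/μ) * x ^ (1/μ - 1)))
          = 1 / (1 + (k * x ^ (1/μ)) ^ 2) * (k * ((1/μ) * x ^ (1/μ - 1))) * deriv V t := by
            ring
        _ ≤ 1 / (1 + (k * x ^ (1/μ)) ^ 2) * (k * ((1/μ) * x ^ (1/μ - 1))) *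
              (-c₁ * x ^ (1 + 1/μ) - c₂ * x ^ (1 - 1/μ)) := this
        _ = 1 / (1 + (k * x ^ (1/μ)) ^ 2) *
              (k * ((-c₁ * x ^ (1 + 1/μ) - c₂ * x ^ (1 - 1/μ)) * (1/μ) * x ^ (1/μ - 1))) := by
            ring
    -- the right-hand side equals -s
    have key : 1 / (1 + (k * x ^ (1/μ)) ^ 2) *
        (k * ((-c₁ * x ^ (1 + 1/μ) - c₂ * x ^ (1 - 1/μ)) * (1/μ) * x ^ (1/μ - 1))) = -s := by
      have expand : (-c₁ * x ^ (1 + 1/μ) - c₂ * x ^ (1 - 1/μ)) * (1/μ) * x ^ (1/μ - 1)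
          = (1/μ) * (-c₁ * (x ^ (1/μ - 1) * x ^ (1 + 1/μ))
              - c₂ * (x ^ (1/μ - 1) * x ^ (1 - 1/μ))) := by ring
      rw [expand, e1, e2, e3, hsdef, ← hkc]
      have hd : (1 + c₁ / c₂ * A) ≠ 0 := ne_of_gt hden
      field_simp
      ring
    linarith [le_trans step (le_of_eq key)]
  -- g is antitone on [0, T]
  have hganti : AntitoneOn g (Set.Icc 0 T) := by
    apply antitoneOn_of_deriv_nonpos (convex_Icc 0 T)
    · intro t ht
      exact ((hgderiv t (hVpos t ht)).differentiableAt).continuousAt.continuousWithinAt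
    · intro t ht
      rw [interior_Icc] at ht
      exact ((hgderiv t (hVpos t ⟨ht.1.le, ht.2.le⟩)).differentiableAt).differentiableWithinAt
    · intro t ht
      rw [interior_Icc] at ht
      exact hderiv_le t ht
  have hineq : g T ≤ g 0 :=
    hganti (Set.left_mem_Icc.2 hT0.le) (Set.right_mem_Icc.2 hT0.le) hT0.le
  -- unfold and derive the contradiction
  have hsT : s * T = Real.pi / 2 := by
    rw [hsdef, hTdef]
    field_simp
  have hVT : 0 < V T := hVpos T (Set.right_mem_Icc.2 hT0.le)
  have harcTpos : 0 < Real.arctan (k * (V T) ^ (1/μ)) := by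
    have h1 : (0:ℝ) < k * (V T) ^ (1/μ) := by positivity
    have := Real.arctan_strictMono h1
    rwa [Real.arctan_zero] at this
  have harc0lt : Real.arctan (k * (V 0) ^ (1/μ)) < Real.pi / 2 :=
    Real.arctan_lt_pi_div_two _
  have hg0 : g 0 = Real.arctan (k * (V 0) ^ (1/μ)) := by
    simp [hgdef]
  have hgT : g T = Real.arctan (k * (V T) ^ (1/μ)) + Real.pi / 2 := by
    rw [hgdef]; simp only []; rw [hsT]
  rw [hg0, hgT] at hineq
  linarith
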